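/- arXiv:1009.2929 — 2 statements merged into one kernel-verified Lean document; each statement's English description precedes it below -/
import Mathlib

section
/- For every integer m ≥ 1, Σ_{j=1}^{m} s(m,j) B_{j-1} = (-1)^{m-1} D_{m-1}, where B_k is the k-th Bell number and D_k is the k-th derangement number. -/
open Polynomial Finset

/-- Stirling numbers of the second kind. -/
def stirling2 : ℕ → ℕ → ℕ
  | 0, 0 => 1
  | 0, _ + 1 => 0
  | _ + 1, 0 => 0
  | n + 1, k + 1 => (k + 1) * stirling2 n (k + 1) + stirling2 n k

/-- Signed Stirling numbers of the first kind. -/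
def stirling1 : ℕ → ℕ → ℤ
  | 0, 0 => 1
  | 0, _ + 1 => 0
  | n + 1, 0 => -(n : ℤ) * stirling1 n 0
  | n + 1, k + 1 => stirling1 n k - (n : ℤ) * stirling1 n (k + 1)

/-- The Bell polynomial `B_m(x) = ∑_{j=0}^m S(m,j) x^j` over `ℤ`. -/
noncomputable def bellPoly (m : ℕ) : Polynomial ℤ :=
  ∑ j ∈ range (m + 1), (stirling2 m j : ℤ) • X ^ j

/-- The derangement polynomial `D_m(x) = ∑_{j=0}^m C(m,j) j! (x-1)^{m-j}` over `ℤ`. -/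
noncomputable def derPoly (m : ℕ) : Polynomial ℤ :=
  ∑ j ∈ range (m + 1), ((m.choose j * j.factorial : ℕ) : ℤ) • (X - 1) ^ (m - j)

/-- The Bell numbers `B_m = ∑_j S(m,j)`. -/
def bell (m : ℕ) : ℕ := ∑ j ∈ range (m + 1), stirling2 m j

lemma stirling2_eq_zero : ∀ {j k : ℕ}, j < k → stirling2 j k = 0
  | 0, _ + 1, _ => rfl
  | j + 1, k + 1, h => by
    have h1 : j < k + 1 := by omega
    have h2 : j < k := by omega
    simp [stirling2, stirling2_eq_zero h1, stirling2_eq_zero h2]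

lemma stirling1_succ_zero (m : ℕ) : stirling1 (m + 1) 0 = 0 := by
  induction m with
  | zero => simp [stirling1]
  | succ n ih =>
    rw [show stirling1 (n + 1 + 1) 0 = -((n + 1 : ℕ) : ℤ) * stirling1 (n + 1) 0 from rfl, ih,
      mul_zero]

lemma stirling1_eq_zero : ∀ {m k : ℕ}, m < k → stirling1 m k = 0
  | 0, _ + 1, _ => rfl
  | m + 1, k + 1, h => by
    have h1 : m < k := by omega
    have h2 : m < k + 1 := by omega
    simp [stirling1, stirling1_eq_zero h1, stirling1_eq_zero h2]

lemma inversion (m : ℕ) : ∀ k : ℕ,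
    ∑ j ∈ range (m + 1), stirling1 m j * (stirling2 j k : ℤ) = if m = k then 1 else 0 := by
  induction m with
  | zero =>
    intro k
    cases k <;> simp [stirling1, stirling2]
  | succ m ih =>
    intro k
    rw [Finset.sum_range_succ']
    rw [stirling1_succ_zero]
    cases k with
    | zero =>
      simp [stirling2]
    | succ k =>
      have hB : ∑ j ∈ range (m + 1), stirling1 m (j + 1) * (stirling2 (j + 1) (k + 1) : ℤ)
          = ∑ j ∈ range (m + 1), stirling1 m j * (stirling2 j (k + 1) : ℤ) := by
        have h1 : ∑ j ∈ range (m + 2), stirling1 m j * (stirling2 j (k + 1) : ℤ)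
            = (∑ j ∈ range (m + 1), stirling1 m (j + 1) * (stirling2 (j + 1) (k + 1) : ℤ))
              + stirling1 m 0 * (stirling2 0 (k + 1) : ℤ) := Finset.sum_range_succ' _ (m + 1)
        have h2 : ∑ j ∈ range (m + 2), stirling1 m j * (stirling2 j (k + 1) : ℤ)
            = (∑ j ∈ range (m + 1), stirling1 m j * (stirling2 j (k + 1) : ℤ))
              + stirling1 m (m + 1) * (stirling2 (m + 1) (k + 1) : ℤ) :=
          Finset.sum_range_succ _ (m + 1)
        rw [stirling1_eq_zero (Nat.lt_succ_self m), zero_mul, add_zero] at h2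
        rw [show ((stirling2 0 (k + 1) : ℕ) : ℤ) = 0 by simp [stirling2], mul_zero,
          add_zero, h2] at h1
        exact h1.symm
      have expand : ∀ j, stirling1 (m + 1) (j + 1) * (stirling2 (j + 1) (k + 1) : ℤ)
          = ((k : ℤ) + 1) * (stirling1 m j * (stirling2 j (k + 1) : ℤ))
            + stirling1 m j * (stirling2 j k : ℤ)
            - (m : ℤ) * (stirling1 m (j + 1) * (stirling2 (j + 1) (k + 1) : ℤ)) := by
        intro j
        have e1 : stirling1 (m + 1) (j + 1)
            = stirling1 m j - (m : ℤ) * stirling1 m (j + 1) := rfl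
        have e2 : (stirling2 (j + 1) (k + 1) : ℤ)
            = ((k : ℤ) + 1) * (stirling2 j (k + 1) : ℤ) + (stirling2 j k : ℤ) := by
          show ((((k + 1) * stirling2 j (k + 1) + stirling2 j k : ℕ)) : ℤ) = _
          push_cast; ring
        rw [e1, e2]
        ring
      simp only [expand]
      rw [Finset.sum_sub_distrib, Finset.sum_add_distrib, ← Finset.mul_sum, ← Finset.mul_sum,
        hB, ih (k + 1), ih k]
      split_ifs <;> simp_all <;> omega

lemma sum_s1_bell (m : ℕ) : ∑ j ∈ range (m + 1), stirling1 m j * (bell j : ℤ) = 1 := by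
  have key : ∀ j ∈ range (m + 1), (bell j : ℤ) = ∑ k ∈ range (m + 1), (stirling2 j k : ℤ) := by
    intro j hj
    simp only [Finset.mem_range] at hj
    unfold bell
    push_cast
    refine Finset.sum_subset (Finset.range_subset_range.mpr (by omega)) ?_
    intro k hk hk'
    simp only [Finset.mem_range, not_lt] at hk'
    have : j < k := by omega
    simp [stirling2_eq_zero this]
  calc ∑ j ∈ range (m + 1), stirling1 m j * (bell j : ℤ)
      = ∑ j ∈ range (m + 1), ∑ k ∈ range (m + 1), stirling1 m j * (stirling2 j k : ℤ) := by
        refine Finset.sum_congr rfl fun j hj => ?_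
        rw [key j hj, Finset.mul_sum]
    _ = ∑ k ∈ range (m + 1), ∑ j ∈ range (m + 1), stirling1 m j * (stirling2 j k : ℤ) :=
        Finset.sum_comm
    _ = ∑ k ∈ range (m + 1), if m = k then (1 : ℤ) else 0 :=
        Finset.sum_congr rfl fun k _ => inversion m k
    _ = 1 := by simp

lemma icc_sum (n : ℕ) (f : ℕ → ℤ) : ∑ j ∈ Icc 1 n, f j = ∑ j ∈ range n, f (j + 1) := by
  rw [← Finset.Ico_add_one_right_eq_Icc, Finset.sum_Ico_eq_sum_range]
  simp [add_comm]

lemma main_aux (m : ℕ) : ∑ j ∈ Icc 1 (m + 1), stirling1 (m + 1) j * (bell (j - 1) : ℤ)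
    = (-1) ^ m * (numDerangements m : ℤ) := by
  induction m with
  | zero =>
    simp [icc_sum, stirling1, bell, stirling2]
  | succ m ih =>
    rw [icc_sum] at ih ⊢
    simp only [Nat.add_sub_cancel] at ih ⊢
    have expand : ∀ j, stirling1 (m + 2) (j + 1) * (bell j : ℤ)
        = stirling1 (m + 1) j * (bell j : ℤ)
          - ((m : ℤ) + 1) * (stirling1 (m + 1) (j + 1) * (bell j : ℤ)) := by
      intro j
      have e1 : stirling1 (m + 2) (j + 1)
          = stirling1 (m + 1) j - ((m : ℤ) + 1) * stirling1 (m + 1) (j + 1) := by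
        show stirling1 (m + 1) j - ((m + 1 : ℕ) : ℤ) * stirling1 (m + 1) (j + 1) = _
        push_cast; ring
      rw [e1]; ring
    simp only [expand]
    rw [Finset.sum_sub_distrib, ← Finset.mul_sum, sum_s1_bell]
    have htop : ∑ j ∈ range (m + 2), stirling1 (m + 1) (j + 1) * (bell j : ℤ)
        = ∑ j ∈ range (m + 1), stirling1 (m + 1) (j + 1) * (bell j : ℤ) := by
      rw [Finset.sum_range_succ, stirling1_eq_zero (by omega : m + 1 < m + 2), zero_mul,
        add_zero]
    rw [htop, ih, numDerangements_succ]
    push_cast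
    rcases neg_one_pow_eq_or ℤ m with h | h <;> rw [pow_succ, h] <;> ring

theorem stirling1_bell_derangement (m : ℕ) (hm : 1 ≤ m) :
    ∑ j ∈ Icc 1 m, stirling1 m j * (bell (j - 1) : ℤ) =
      (-1) ^ (m - 1) * (numDerangements (m - 1) : ℤ) := by
  obtain ⟨n, rfl⟩ : ∃ n, m = n + 1 := ⟨m - 1, by omega⟩
  simpa using main_aux n
end

section
/- For any integers n ≥ 0, m ≥ 1 and any prime p not dividing m, the polynomial congruence x^m · Σ_{k=1}^{p-1} (−m)^{p-1-k} B_{n+k}(x) ≡ x^p · Σ_{k=0}^{n} S(n,k) (−1)^{m+k-1} D_{m+k-1}(1−x) (mod p) holds coefficientwise. -/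
set_option linter.unusedSectionVars false


open Polynomial Finset

lemma stirling2_zero_right (n : ℕ) : stirling2 (n + 1) 0 = 0 := rfl

lemma stirling2_succ (n k : ℕ) :
    stirling2 (n + 1) (k + 1) = (k + 1) * stirling2 n (k + 1) + stirling2 n k := rfl

lemma stirling2_eq_zero_of_lt : ∀ {n k : ℕ}, n < k → stirling2 n k = 0
  | 0, _ + 1, _ => rfl
  | n + 1, k + 1, h => by
    rw [stirling2_succ, stirling2_eq_zero_of_lt (by omega), stirling2_eq_zero_of_lt (by omega)]
    simp

variable {R : Type*} [CommRing R]

lemma X_mul_descPochhammer (k : ℕ) :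
    (X : R[X]) * descPochhammer R k
      = descPochhammer R (k + 1) + (k : R) • descPochhammer R k := by
  have h : ((k : R) • descPochhammer R k) = (k : R[X]) * descPochhammer R k := by
    rw [smul_eq_C_mul, C_eq_natCast]
  rw [h, descPochhammer_succ_right]
  ring

lemma X_pow_eq_sum_stirling (n : ℕ) :
    (X : R[X]) ^ n = ∑ k ∈ range (n + 1), (stirling2 n k : R) • descPochhammer R k := by
  induction n with
  | zero => simp [stirling2]
  | succ n ih =>
    have step : (X : R[X]) ^ (n + 1)
        = ∑ k ∈ range (n + 1), ((stirling2 n k : R) • descPochhammer R (k + 1)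
            + ((stirling2 n k * k : ℕ) : R) • descPochhammer R k) := by
      rw [pow_succ, mul_comm, ih, Finset.mul_sum]
      refine sum_congr rfl fun k _ => ?_
      rw [mul_smul_comm, X_mul_descPochhammer, smul_add, smul_smul]
      push_cast
      ring_nf
    rw [step, sum_add_distrib]
    have hB : ∑ k ∈ range (n + 1), ((stirling2 n k * k : ℕ) : R) • descPochhammer R k
        = ∑ k ∈ range (n + 1), ((stirling2 n (k + 1) * (k + 1) : ℕ) : R)
            • descPochhammer R (k + 1) := by
      rw [sum_range_succ' (fun k => ((stirling2 n k * k : ℕ) : R) • descPochhammer R k)]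
      rw [sum_range_succ]
      simp [stirling2_eq_zero_of_lt (Nat.lt_succ_self n)]
    rw [hB, ← sum_add_distrib]
    rw [sum_range_succ' (fun k => (stirling2 (n + 1) k : R) • descPochhammer R k)]
    simp only [stirling2_zero_right, Nat.cast_zero, zero_smul, add_zero]
    refine sum_congr rfl fun k _ => ?_
    rw [stirling2_succ, ← add_smul]
    push_cast
    ring_nf


lemma descPochhammer_eq_prod (R : Type*) [CommRing R] (n : ℕ) :
    descPochhammer R n = ∏ i ∈ range n, (X - (i : R[X])) := by
  induction n with
  | zero => simp
  | succ n ih => rw [descPochhammer_succ_right, ih, prod_range_succ]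

lemma descPochhammer_card (p : ℕ) [Fact p.Prime] :
    descPochhammer (ZMod p) p = X ^ p - X := by
  have hp1 : (1:ℕ) < p := (Fact.out : p.Prime).one_lt
  have hcard : Fintype.card (ZMod p) = p := ZMod.card p
  have hmonic : (X ^ p - X : (ZMod p)[X]).Monic := by
    apply (monic_X_pow p).sub_of_left
    rw [degree_X_pow, degree_X]
    exact_mod_cast hp1
  have hroots : (X ^ p - X : (ZMod p)[X]).roots = Finset.univ.val := by
    have := FiniteField.roots_X_pow_card_sub_X (ZMod p)
    rwa [hcard] at this
  have hdeg : (X ^ p - X : (ZMod p)[X]).natDegree = p :=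
    FiniteField.X_pow_card_sub_X_natDegree_eq _ hp1
  have hprod : ((X ^ p - X : (ZMod p)[X]).roots.map fun a => X - C a).prod = X ^ p - X := by
    apply prod_multiset_X_sub_C_of_monic_of_roots_card_eq hmonic
    rw [hroots, hdeg]
    exact hcard
  rw [descPochhammer_eq_prod, ← hprod, hroots]
  rw [show ((Finset.univ.val.map fun a : ZMod p => X - C a)).prod
      = ∏ a : ZMod p, (X - C a) from rfl]
  refine Finset.prod_nbij' (fun i => (i : ZMod p)) (fun a => a.val) ?_ ?_ ?_ ?_ ?_
  · intro i _; exact mem_univ _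
  · intro a _; exact mem_range.mpr (ZMod.val_lt a)
  · intro i hi; exact ZMod.val_cast_of_lt (mem_range.mp hi)
  · intro a _; exact ZMod.natCast_rightInverse a
  · intro i _; rw [C_eq_natCast]


variable {R : Type*} [CommRing R]

lemma descPochhammer_succ_comp_X_add_one (j : ℕ) :
    (descPochhammer R (j + 1)).comp (X + 1)
      = descPochhammer R (j + 1) + ((j : R) + 1) • descPochhammer R j := by
  conv_lhs => rw [descPochhammer_succ_left, mul_comp, X_comp, comp_assoc]
  conv_rhs => rw [descPochhammer_succ_right]
  have h1 : ((X - 1 : R[X]).comp (X + 1)) = X := by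
    rw [sub_comp, X_comp, one_comp]; ring
  rw [h1, comp_X]
  have h2 : ((j : R) + 1) • descPochhammer R j = ((j : R[X]) + 1) * descPochhammer R j := by
    rw [smul_eq_C_mul, map_add, C_eq_natCast, map_one]
  rw [h2]
  ring

lemma bellPoly_zero : bellPoly 0 = 1 := by
  simp [bellPoly, stirling2]

lemma bellPoly_one : bellPoly 1 = X := by
  simp [bellPoly, stirling2, sum_range_succ]

lemma bellPoly_succ (n : ℕ) :
    bellPoly (n + 1) = X * (derivative (bellPoly n) + bellPoly n) := by
  unfold bellPoly
  rw [derivative_sum]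
  simp only [derivative_smul, derivative_X_pow]
  rw [mul_add, Finset.mul_sum, Finset.mul_sum]
  have hA : ∑ j ∈ range (n + 1), (X:ℤ[X]) * (stirling2 n j : ℤ) • (C (j : ℤ) * X ^ (j - 1))
      = ∑ j ∈ range (n + 1), ((j * stirling2 n j : ℕ) : ℤ) • X ^ j := by
    refine sum_congr rfl fun j _ => ?_
    cases j with
    | zero => simp
    | succ i =>
      rw [Nat.add_sub_cancel]
      have h : (X:ℤ[X]) * (C ((i + 1 : ℕ) : ℤ) * X ^ i) = ((i + 1 : ℕ) : ℤ) • X ^ (i + 1) := by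
        rw [smul_eq_C_mul]; ring
      rw [mul_smul_comm, h, smul_smul]
      push_cast
      ring_nf
  rw [hA]
  have hB : ∑ j ∈ range (n + 1), (X:ℤ[X]) * (stirling2 n j : ℤ) • X ^ j
      = ∑ j ∈ range (n + 1), (stirling2 n j : ℤ) • X ^ (j + 1) := by
    refine sum_congr rfl fun j _ => ?_
    rw [mul_smul_comm, ← pow_succ']
  rw [hB]
  have hA2 : ∑ j ∈ range (n + 1), ((j * stirling2 n j : ℕ) : ℤ) • (X:ℤ[X]) ^ j
      = ∑ j ∈ range (n + 1), (((j + 1) * stirling2 n (j + 1) : ℕ) : ℤ) • X ^ (j + 1) := by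
    rw [sum_range_succ' (fun j => ((j * stirling2 n j : ℕ) : ℤ) • (X:ℤ[X]) ^ j)]
    rw [sum_range_succ]
    simp [stirling2_eq_zero_of_lt (Nat.lt_succ_self n)]
  rw [hA2, ← sum_add_distrib]
  rw [sum_range_succ' (fun j => (stirling2 (n + 1) j : ℤ) • (X:ℤ[X]) ^ j)]
  simp only [show stirling2 (n + 1) 0 = 0 from rfl, Nat.cast_zero, zero_smul, add_zero]
  refine sum_congr rfl fun j _ => ?_
  rw [stirling2_succ, ← add_smul]
  push_cast
  ring_nf

lemma derPoly_zero : derPoly 0 = 1 := by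
  simp [derPoly]

lemma derPoly_succ (j : ℕ) :
    derPoly (j + 1) = ((j : ℤ) + 1) • derPoly j + (X - 1) ^ (j + 1) := by
  unfold derPoly
  rw [sum_range_succ' (fun i => (((j + 1).choose i * i.factorial : ℕ) : ℤ) • (X - 1 : ℤ[X]) ^ (j + 1 - i))]
  simp only [Nat.choose_zero_right, Nat.factorial_zero, mul_one, Nat.cast_one, one_smul,
    Nat.sub_zero]
  congr 1
  rw [Finset.smul_sum]
  refine sum_congr rfl fun i _ => ?_
  rw [smul_smul]
  have harith : (j + 1).choose (i + 1) * (i + 1).factorial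
      = (j + 1) * (j.choose i * i.factorial) := by
    rw [Nat.factorial_succ, ← mul_assoc, mul_comm ((j+1).choose (i+1)) (i+1)]
    rw [show (i + 1) * (j + 1).choose (i + 1) = (j + 1) * j.choose i from by
      rw [mul_comm]; exact (Nat.add_one_mul_choose_eq j i).symm]
    ring
  have hsub : j + 1 - (i + 1) = j - i := by omega
  rw [hsub]
  congr 1
  push_cast [harith]
  ring


lemma finset_sum_comp {R : Type*} [CommRing R] {ι : Type*} (s : Finset ι) (g : ι → R[X])
    (q : R[X]) : (∑ i ∈ s, g i).comp q = ∑ i ∈ s, (g i).comp q := by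
  simp only [Polynomial.comp, eval₂_finset_sum]

section Phi

variable {p : ℕ} [Fact p.Prime]

noncomputable def Bb (p : ℕ) (n : ℕ) : (ZMod p)[X] :=
  (bellPoly n).map (Int.castRingHom (ZMod p))

noncomputable def phi (p : ℕ) : (ZMod p)[X] →ₗ[ZMod p] (ZMod p)[X] :=
  Polynomial.lsum fun n => LinearMap.toSpanSingleton (ZMod p) _ (Bb p n)

lemma phi_monomial (n : ℕ) (a : ZMod p) : phi p (monomial n a) = a • Bb p n := by
  simp [phi, Polynomial.lsum_apply, Polynomial.sum_monomial_index,
    LinearMap.toSpanSingleton_apply]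

lemma phi_X_pow (n : ℕ) : phi p (X ^ n) = Bb p n := by
  rw [X_pow_eq_monomial, phi_monomial, one_smul]

lemma Bb_zero : Bb p 0 = 1 := by rw [Bb, bellPoly_zero, Polynomial.map_one]

lemma Bb_one : Bb p 1 = X := by rw [Bb, bellPoly_one, Polynomial.map_X]

lemma Bb_succ (n : ℕ) : Bb p (n + 1) = X * (derivative (Bb p n) + Bb p n) := by
  unfold Bb
  rw [bellPoly_succ, Polynomial.map_mul, Polynomial.map_X, Polynomial.map_add,
    ← derivative_map]

lemma phi_one : phi p 1 = 1 := by
  have h := phi_X_pow (p := p) 0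
  rwa [pow_zero, Bb_zero] at h

lemma phi_C_mul (a : ZMod p) (f : (ZMod p)[X]) : phi p (C a * f) = a • phi p f := by
  rw [← smul_eq_C_mul, map_smul]

lemma phi_X_mul (f : (ZMod p)[X]) :
    phi p (X * f) = X * (phi p f + derivative (phi p f)) := by
  induction f using Polynomial.induction_on' with
  | add f g hf hg =>
    rw [mul_add, map_add, hf, hg, map_add, derivative_add]; ring
  | monomial n a =>
    rw [X_mul_monomial, phi_monomial, phi_monomial, Bb_succ, derivative_smul, ← smul_add,
      mul_smul_comm, add_comm (derivative (Bb p n)) (Bb p n)]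

lemma phi_descPochhammer (k : ℕ) : phi p (descPochhammer (ZMod p) k) = X ^ k := by
  induction k with
  | zero => simpa using phi_one
  | succ k ih =>
    have h : descPochhammer (ZMod p) (k + 1)
        = X * descPochhammer (ZMod p) k - (k : ZMod p) • descPochhammer (ZMod p) k := by
      rw [descPochhammer_succ_right, smul_eq_C_mul, C_eq_natCast]; ring
    rw [h, map_sub, map_smul, phi_X_mul, ih]
    cases k with
    | zero => simp
    | succ k =>
      rw [derivative_X_pow, Nat.add_sub_cancel, smul_eq_C_mul]
      ring

lemma phi_X_mul_descP (k : ℕ) :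
    phi p (X * descPochhammer (ZMod p) k) = X ^ (k + 1) + (k : ZMod p) • X ^ k := by
  rw [X_mul_descPochhammer, map_add, map_smul, phi_descPochhammer, phi_descPochhammer]

lemma X_mul_phi_descP_comp (k : ℕ) :
    X * phi p ((descPochhammer (ZMod p) k).comp (X + 1))
      = X ^ (k + 1) + (k : ZMod p) • X ^ k := by
  cases k with
  | zero => simp [phi_one]
  | succ k =>
    rw [descPochhammer_succ_comp_X_add_one, map_add, map_smul, phi_descPochhammer,
      phi_descPochhammer, smul_eq_C_mul, smul_eq_C_mul, Nat.cast_add, Nat.cast_one]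
    ring

lemma phi_X_pow_mul (n : ℕ) :
    phi p (X * X ^ n) = X * phi p ((X ^ n : (ZMod p)[X]).comp (X + 1)) := by
  have e := X_pow_eq_sum_stirling (R := ZMod p) n
  have L : phi p (X * X ^ n)
      = ∑ k ∈ range (n + 1), (stirling2 n k : ZMod p)
          • phi p (X * descPochhammer (ZMod p) k) := by
    rw [e, Finset.mul_sum]
    simp_rw [mul_smul_comm]
    rw [map_sum]
    simp_rw [map_smul]
  have Rr : X * phi p ((X ^ n : (ZMod p)[X]).comp (X + 1))
      = ∑ k ∈ range (n + 1), (stirling2 n k : ZMod p)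
          • (X * phi p ((descPochhammer (ZMod p) k).comp (X + 1))) := by
    rw [e, finset_sum_comp]
    simp_rw [smul_comp]
    rw [map_sum]
    simp_rw [map_smul]
    rw [Finset.mul_sum]
    simp_rw [mul_smul_comm]
  rw [L, Rr]
  refine sum_congr rfl fun k _ => ?_
  rw [phi_X_mul_descP, X_mul_phi_descP_comp]

lemma phi_X_mul' (f : (ZMod p)[X]) :
    phi p (X * f) = X * phi p (f.comp (X + 1)) := by
  induction f using Polynomial.induction_on' with
  | add f g hf hg => rw [mul_add, map_add, hf, hg, add_comp, map_add, mul_add]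
  | monomial n a =>
    rw [← C_mul_X_pow_eq_monomial,
      show (X : (ZMod p)[X]) * (C a * X ^ n) = C a * (X * X ^ n) by ring,
      phi_C_mul, phi_X_pow_mul, mul_comp, C_comp, phi_C_mul, mul_smul_comm]

lemma phi_descP_mul (k : ℕ) (f : (ZMod p)[X]) :
    phi p (descPochhammer (ZMod p) k * f)
      = X ^ k * phi p (f.comp (X + C (k : ZMod p))) := by
  induction k generalizing f with
  | zero => simp
  | succ k ih =>
    have h : descPochhammer (ZMod p) (k + 1) * f
        = descPochhammer (ZMod p) k * ((X - C (k : ZMod p)) * f) := by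
      rw [descPochhammer_succ_right, C_eq_natCast]; ring
    rw [h, ih, mul_comp, sub_comp, X_comp, C_comp,
      show (X : (ZMod p)[X]) + C (k : ZMod p) - C (k : ZMod p) = X by ring,
      phi_X_mul', comp_assoc]
    have h2 : ((X : (ZMod p)[X]) + C (k : ZMod p)).comp (X + 1) = X + C ((k : ZMod p) + 1) := by
      rw [add_comp, X_comp, C_comp]; rw [map_add, map_one]; ring
    rw [h2]
    have h3 : ((k + 1 : ℕ) : ZMod p) = 1 + (k : ZMod p) := by push_cast; ring
    rw [h3]
    ring

noncomputable def G (p : ℕ) (j : ℕ) : (ZMod p)[X] :=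
  (descPochhammer (ZMod p) (p - 1)).comp (X + C ((j : ZMod p) - 1))

lemma G_one : G p 1 = descPochhammer (ZMod p) (p - 1) := by
  simp [G]

lemma G_comp_add (m k : ℕ) : (G p m).comp (X + C (k : ZMod p)) = G p (m + k) := by
  rw [G, G, comp_assoc]
  congr 1
  rw [add_comp, X_comp, C_comp, add_assoc, ← C_add]
  congr 2
  push_cast
  ring

lemma G_comp_one (m : ℕ) : (G p m).comp (X + 1) = G p (m + 1) := by
  have h := G_comp_add (p := p) m 1
  rwa [Nat.cast_one, map_one] at h

lemma X_add_mul_G (j : ℕ) : (X + C (j : ZMod p)) * G p j = X ^ p - X := by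
  have h1 : (X + C (j : ZMod p))
      = ((X + 1 : (ZMod p)[X]).comp (X + C ((j : ZMod p) - 1))) := by
    rw [add_comp, X_comp, one_comp, show (1 : (ZMod p)[X]) = C 1 from (map_one C).symm,
      add_assoc, ← C_add]
    congr 2
    ring
  have h2 : ((X + 1) * descPochhammer (ZMod p) (p - 1) : (ZMod p)[X]) = X ^ p - X := by
    have hp1 : p - 1 + 1 = p := Nat.succ_pred_eq_of_pos (Fact.out : p.Prime).pos
    have hs := descPochhammer_succ_right (ZMod p) (p - 1)
    rw [hp1, descPochhammer_card] at hs
    have hcast : ((p - 1 : ℕ) : (ZMod p)[X]) = -1 := by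
      rw [← C_eq_natCast]
      have : ((p - 1 : ℕ) : ZMod p) = -1 := by
        have h1p : (1:ℕ) ≤ p := (Fact.out : p.Prime).pos
        push_cast [Nat.cast_sub h1p]
        rw [ZMod.natCast_self]
        ring
      rw [this, map_neg, map_one]
    rw [hcast] at hs
    rw [hs]
    ring
  rw [h1, G, ← mul_comp, h2]
  rw [sub_comp, pow_comp, X_comp, add_pow_char, ← C_pow, ZMod.pow_card]
  ring

noncomputable def Ebar (p : ℕ) (j : ℕ) : (ZMod p)[X] :=
  ((-1 : ZMod p) ^ j) • (((derPoly j).map (Int.castRingHom (ZMod p))).comp (1 - X))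

lemma Ebar_zero : Ebar p 0 = 1 := by
  simp [Ebar, derPoly_zero]

lemma Ebar_succ (j : ℕ) :
    Ebar p (j + 1) = X ^ (j + 1) - ((j : ZMod p) + 1) • Ebar p j := by
  unfold Ebar
  rw [derPoly_succ,
    show ((j : ℤ) + 1) • derPoly j = C ((j : ℤ) + 1) * derPoly j from smul_eq_C_mul _,
    Polynomial.map_add, Polynomial.map_mul, map_C,
    Polynomial.map_pow, Polynomial.map_sub, Polynomial.map_one, Polynomial.map_X,
    add_comp, mul_comp, C_comp, pow_comp, sub_comp, X_comp, one_comp]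
  rw [show ((1 : (ZMod p)[X]) - X - 1) = -X by ring]
  have hc : ((Int.castRingHom (ZMod p)) ((j : ℤ) + 1)) = ((j : ZMod p) + 1) := by
    simp
  rw [hc]
  rw [smul_eq_C_mul, smul_eq_C_mul, smul_eq_C_mul, map_pow, map_pow, map_neg, map_one]
  have key1 : ((-1 : (ZMod p)[X])) ^ (j + 1) * (-X) ^ (j + 1) = X ^ (j + 1) := by
    rw [← mul_pow, neg_mul_neg, one_mul]
  rw [mul_add, key1, pow_succ]
  ring

lemma phi_X_pow_sub_X : phi p (X ^ p - X) = X ^ p := by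
  rw [← descPochhammer_card, phi_descPochhammer]

lemma key_lemma (j : ℕ) : X ^ (j + 1) * phi p (G p (j + 1)) = X ^ p * Ebar p j := by
  induction j with
  | zero =>
    rw [G_one, phi_descPochhammer, Ebar_zero, mul_one, ← pow_add]
    congr 1
    have h1p : (1:ℕ) ≤ p := (Fact.out : p.Prime).pos
    omega
  | succ j ih =>
    have hrel : (X + C ((j + 1 : ℕ) : ZMod p)) * G p (j + 1) = X ^ p - X := X_add_mul_G _
    have h2 : phi p ((X + C ((j + 1 : ℕ) : ZMod p)) * G p (j + 1))
        = X * phi p (G p (j + 2)) + ((j + 1 : ℕ) : ZMod p) • phi p (G p (j + 1)) := by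
      rw [add_mul, map_add, phi_X_mul', G_comp_one, phi_C_mul]
    have h4 : phi p ((X + C ((j + 1 : ℕ) : ZMod p)) * G p (j + 1)) = X ^ p := by
      rw [hrel, phi_X_pow_sub_X]
    have h3 : X * phi p (G p (j + 2))
        = X ^ p - ((j + 1 : ℕ) : ZMod p) • phi p (G p (j + 1)) :=
      eq_sub_of_add_eq (h2.symm.trans h4)
    have hc : ((j + 1 : ℕ) : ZMod p) = (j : ZMod p) + 1 := by push_cast; ring
    rw [hc] at h3
    calc X ^ (j + 1 + 1) * phi p (G p (j + 1 + 1))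
        = X ^ (j + 1) * (X * phi p (G p (j + 2))) := by ring
      _ = X ^ (j + 1) * (X ^ p - ((j : ZMod p) + 1) • phi p (G p (j + 1))) := by rw [h3]
      _ = X ^ p * X ^ (j + 1) - ((j : ZMod p) + 1) • (X ^ (j + 1) * phi p (G p (j + 1))) := by
          rw [mul_sub, mul_smul_comm]
          ring_nf
      _ = X ^ p * X ^ (j + 1) - ((j : ZMod p) + 1) • (X ^ p * Ebar p j) := by rw [ih]
      _ = X ^ p * Ebar p (j + 1) := by
          rw [Ebar_succ, mul_sub, mul_smul_comm]

lemma G_eq_sum {m : ℕ} (hm : (m : ZMod p) ≠ 0) :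
    G p m = ∑ k ∈ Icc 1 (p - 1), C ((-(m : ZMod p)) ^ (p - 1 - k)) * X ^ k := by
  have hp1 : p - 1 + 1 = p := Nat.succ_pred_eq_of_pos (Fact.out : p.Prime).pos
  have hXm : (X + C (m : ZMod p)) ≠ 0 := (monic_X_add_C _).ne_zero
  apply mul_left_cancel₀ hXm
  rw [X_add_mul_G]
  have hIcc : (Icc 1 (p - 1)) = Ico 1 p := by
    rw [← Finset.Ico_add_one_right_eq_Icc]
    congr 1
  rw [hIcc, Finset.sum_Ico_eq_sum_range]
  have hrw : ∀ i ∈ range (p - 1), C ((-(m : ZMod p)) ^ (p - 1 - (1 + i))) * X ^ (1 + i)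
      = X * (X ^ i * C (-(m : ZMod p)) ^ (p - 1 - 1 - i)) := by
    intro i hi
    have he : p - 1 - (1 + i) = p - 1 - 1 - i := by omega
    rw [he, ← map_pow, pow_add, pow_one]
    ring
  rw [sum_congr rfl hrw, ← Finset.mul_sum]
  symm
  have hg := geom_sum₂_mul (X : (ZMod p)[X]) (C (-(m : ZMod p))) (p - 1)
  have h1 : (C (-(m : ZMod p))) ^ (p - 1) = (1 : (ZMod p)[X]) := by
    rw [← map_pow, ZMod.pow_card_sub_one_eq_one (neg_ne_zero.mpr hm), map_one]
  have hXC : X - C (-(m : ZMod p)) = X + C (m : ZMod p) := by rw [map_neg]; ring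
  calc (X + C (m : ZMod p)) * (X * ∑ i ∈ range (p - 1), X ^ i * C (-(m : ZMod p)) ^ (p - 1 - 1 - i))
      = X * ((∑ i ∈ range (p - 1), X ^ i * C (-(m : ZMod p)) ^ (p - 1 - 1 - i))
          * (X - C (-(m : ZMod p)))) := by rw [hXC]; ring
    _ = X * (X ^ (p - 1) - 1) := by rw [hg, h1]
    _ = X ^ p - X := by
        rw [mul_sub, mul_one, ← pow_succ']
        rw [show p - 1 + 1 = p from hp1]

end Phi


theorem sun_zagier_poly (n m p : ℕ) (hm : 1 ≤ m) (hp : p.Prime) (hpm : ¬ p ∣ m) :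
    ∀ i, (p : ℤ) ∣
      (X ^ m * ∑ k ∈ Icc 1 (p - 1), C ((-(m : ℤ)) ^ (p - 1 - k)) * bellPoly (n + k) -
        X ^ p * ∑ k ∈ range (n + 1),
          C ((stirling2 n k : ℤ) * (-1) ^ (m + k - 1)) * (derPoly (m + k - 1)).comp (1 - X)).coeff i := by
  haveI : Fact p.Prime := ⟨hp⟩
  have hmz : (m : ZMod p) ≠ 0 := by
    rw [Ne, ZMod.natCast_eq_zero_iff]
    exact hpm
  obtain ⟨m', rfl⟩ : ∃ m', m = m' + 1 := ⟨m - 1, by omega⟩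
  set ρ := Int.castRingHom (ZMod p) with hρ
  set F := (X ^ (m' + 1) * ∑ k ∈ Icc 1 (p - 1), C ((-((m' + 1 : ℕ) : ℤ)) ^ (p - 1 - k)) * bellPoly (n + k) -
        X ^ p * ∑ k ∈ range (n + 1),
          C ((stirling2 n k : ℤ) * (-1) ^ (m' + 1 + k - 1)) * (derPoly (m' + 1 + k - 1)).comp (1 - X)) with hF
  suffices hF0 : F.map ρ = 0 by
    intro i
    rw [← ZMod.intCast_zmod_eq_zero_iff_dvd]
    have : ((F.coeff i : ℤ) : ZMod p) = (F.map ρ).coeff i := (coeff_map ρ i).symm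
    rw [this, hF0, coeff_zero]
  rw [hF, Polynomial.map_sub, sub_eq_zero]
  have hmapL : ((X ^ (m' + 1) * ∑ k ∈ Icc 1 (p - 1),
        C ((-((m' + 1 : ℕ) : ℤ)) ^ (p - 1 - k)) * bellPoly (n + k)).map ρ)
      = X ^ (m' + 1) * ∑ k ∈ Icc 1 (p - 1),
          C ((-(((m' + 1 : ℕ)) : ZMod p)) ^ (p - 1 - k)) * Bb p (n + k) := by
    rw [Polynomial.map_mul, Polynomial.map_pow, Polynomial.map_X, Polynomial.map_sum]
    congr 1
    refine sum_congr rfl fun k _ => ?_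
    rw [Polynomial.map_mul, map_C, map_pow, map_neg, map_natCast]
    rfl
  have hstep1 : ∑ k ∈ Icc 1 (p - 1),
        C ((-(((m' + 1 : ℕ)) : ZMod p)) ^ (p - 1 - k)) * Bb p (n + k)
      = phi p (X ^ n * G p (m' + 1)) := by
    have hXG : X ^ n * G p (m' + 1) = ∑ k ∈ Icc 1 (p - 1),
        C ((-(((m' + 1 : ℕ)) : ZMod p)) ^ (p - 1 - k)) * X ^ (n + k) := by
      rw [G_eq_sum hmz, Finset.mul_sum]
      refine sum_congr rfl fun k _ => ?_
      rw [pow_add]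
      ring
    rw [hXG, map_sum]
    refine sum_congr rfl fun k _ => ?_
    rw [phi_C_mul, phi_X_pow, smul_eq_C_mul]
  have hstep2 : X ^ (m' + 1) * phi p (X ^ n * G p (m' + 1))
      = X ^ p * ∑ k ∈ range (n + 1), (stirling2 n k : ZMod p) • Ebar p (m' + k) := by
    rw [X_pow_eq_sum_stirling (R := ZMod p) n, sum_mul, map_sum, Finset.mul_sum, Finset.mul_sum]
    refine sum_congr rfl fun k _ => ?_
    rw [smul_mul_assoc, map_smul, mul_smul_comm, mul_smul_comm]
    congr 1
    rw [phi_descP_mul, G_comp_add, ← mul_assoc, ← pow_add]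
    rw [show m' + 1 + k = (m' + k) + 1 from by omega]
    exact key_lemma (m' + k)
  have hmapR : ((X ^ p * ∑ k ∈ range (n + 1),
        C ((stirling2 n k : ℤ) * (-1) ^ (m' + 1 + k - 1)) * (derPoly (m' + 1 + k - 1)).comp (1 - X)).map ρ)
      = X ^ p * ∑ k ∈ range (n + 1), (stirling2 n k : ZMod p) • Ebar p (m' + k) := by
    rw [Polynomial.map_mul, Polynomial.map_pow, Polynomial.map_X, Polynomial.map_sum]
    congr 1
    refine sum_congr rfl fun k _ => ?_
    have he : m' + 1 + k - 1 = m' + k := by omega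
    rw [he, Polynomial.map_mul, map_C, Polynomial.map_comp, Polynomial.map_sub,
      Polynomial.map_one, Polynomial.map_X]
    simp only [Ebar]
    rw [smul_smul, smul_eq_C_mul, map_mul, map_pow, map_neg, map_one, map_natCast]
  rw [hmapL, hmapR, hstep1, hstep2]
end
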